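/- arXiv:2510.07205 — 2 statements merged into one kernel-verified Lean document; each statement's English description precedes it below -/
import Mathlib

section
/- Let v, w ∈ ℝ^d be unit vectors and let g, h : ℝ → ℝ be twice continuously differentiable functions all of whose relevant derivatives have at most polynomial growth. Then for x ~ N(0, I_d), E[g(vᵀx) h(wᵀx) x xᵀ] = E[g(vᵀx) h(wᵀx)] I_d + E[g'(vᵀx) h'(wᵀx)] (v wᵀ + w vᵀ) + E[g''(vᵀx) h(wᵀx)] v vᵀ + E[g(vᵀx) h''(wᵀx)] w wᵀ. -/
open MeasureTheory ProbabilityTheory Real Filter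

/-- The standard Gaussian measure on `ℝ^d` (i.i.d. standard Gaussian coordinates). -/
noncomputable def stdGaussian (d : ℕ) : Measure (Fin d → ℝ) :=
  Measure.pi fun _ => gaussianReal 0 1

namespace SteinAux

instance (n : ℕ) : IsProbabilityMeasure (stdGaussian n) := by
  rw [_root_.stdGaussian]; infer_instance

/-- polynomial bound function -/
def bf {n : ℕ} (N : ℕ) (x : Fin n → ℝ) : ℝ := ∏ l, (1 + |x l|) ^ N

lemma one_le_prod_real {ι : Type*} (s : Finset ι) (f : ι → ℝ) (h : ∀ i ∈ s, 1 ≤ f i) :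
    1 ≤ ∏ i ∈ s, f i := by
  calc (1:ℝ) = ∏ _i ∈ s, 1 := by simp
  _ ≤ ∏ i ∈ s, f i := Finset.prod_le_prod (by simp) h

lemma one_le_bf {n N : ℕ} (x : Fin n → ℝ) : 1 ≤ bf N x := by
  rw [bf]
  exact one_le_prod_real _ _ fun l _ => one_le_pow₀ (by linarith [abs_nonneg (x l)])

lemma bf_nonneg {n N : ℕ} (x : Fin n → ℝ) : 0 ≤ bf N x :=
  zero_le_one.trans (one_le_bf x)

lemma bf_mul {n : ℕ} (N M : ℕ) (x : Fin n → ℝ) : bf N x * bf M x = bf (N + M) x := by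
  rw [bf, bf, bf, ← Finset.prod_mul_distrib]
  simp [pow_add]

lemma bf_mono {n : ℕ} {N M : ℕ} (h : N ≤ M) (x : Fin n → ℝ) : bf N x ≤ bf M x := by
  rw [bf, bf]
  exact Finset.prod_le_prod (fun l _ => by positivity) fun l _ =>
    pow_le_pow_right₀ (by linarith [abs_nonneg (x l)]) h

lemma abs_coord_le_bf {n : ℕ} (x : Fin n → ℝ) (i : Fin n) : |x i| ≤ bf 1 x := by
  rw [bf]
  simp only [pow_one]
  rw [← Finset.mul_prod_erase Finset.univ (fun l => 1 + |x l|) (Finset.mem_univ i)]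
  have h1 : (1:ℝ) ≤ ∏ l ∈ Finset.univ.erase i, (1 + |x l|) :=
    one_le_prod_real _ _ fun l _ => by linarith [abs_nonneg (x l)]
  nlinarith [abs_nonneg (x i)]

lemma one_add_sum_le_prod {ι : Type*} (s : Finset ι) (a : ι → ℝ) (ha : ∀ i ∈ s, 0 ≤ a i) :
    1 + ∑ i ∈ s, a i ≤ ∏ i ∈ s, (1 + a i) := by
  induction s using Finset.cons_induction with
  | empty => simp
  | cons i s hi ih =>
    rw [Finset.sum_cons, Finset.prod_cons]
    have h1 : 0 ≤ a i := ha i (Finset.mem_cons_self i s)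
    have h2 : ∀ j ∈ s, 0 ≤ a j := fun j hj => ha j (Finset.mem_cons_of_mem hj)
    have h3 := ih h2
    have h4 : 0 ≤ ∑ j ∈ s, a j := Finset.sum_nonneg h2
    nlinarith

lemma abs_dot_pow_le {n : ℕ} (v : Fin n → ℝ) (q : ℕ) :
    ∃ K : ℝ, 0 ≤ K ∧ ∀ x, (1 + |∑ l, v l * x l|) ^ q ≤ K * bf q x := by
  set S : ℝ := ∑ l, |v l| with hS
  have hS0 : 0 ≤ S := Finset.sum_nonneg fun l _ => abs_nonneg _
  refine ⟨(1 + S) ^ q, by positivity, fun x => ?_⟩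
  have h1 : |∑ l, v l * x l| ≤ S * ∑ l, |x l| := by
    calc |∑ l, v l * x l| ≤ ∑ l, |v l * x l| := Finset.abs_sum_le_sum_abs _ _
    _ ≤ ∑ l, S * |x l| := Finset.sum_le_sum fun l _ => by
        rw [abs_mul]
        exact mul_le_mul_of_nonneg_right
          (Finset.single_le_sum (fun m (_ : m ∈ Finset.univ) => abs_nonneg (v m))
            (Finset.mem_univ l)) (abs_nonneg _)
    _ = S * ∑ l, |x l| := by rw [Finset.mul_sum]
  have h2 : 0 ≤ ∑ l, |x l| := Finset.sum_nonneg fun l _ => abs_nonneg _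
  have h3 : 1 + |∑ l, v l * x l| ≤ (1 + S) * ∏ l, (1 + |x l|) := by
    have h4 : 1 + ∑ l, |x l| ≤ ∏ l, (1 + |x l|) :=
      one_add_sum_le_prod _ _ fun l _ => abs_nonneg _
    nlinarith
  calc (1 + |∑ l, v l * x l|) ^ q ≤ ((1 + S) * ∏ l, (1 + |x l|)) ^ q :=
        pow_le_pow_left₀ (by positivity) h3 q
  _ = (1 + S) ^ q * bf q x := by rw [mul_pow, bf, ← Finset.prod_pow]

lemma integrable_poly_gauss (q : ℕ) :
    Integrable (fun x : ℝ => (1 + |x|) ^ q * Real.exp (-(x ^ 2) / 2)) volume := by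
  have key : ∀ x : ℝ, (1 + |x|) ^ q ≤ (2 ^ q * (2 + (q.factorial : ℝ) * 4 ^ q)) *
      Real.exp (x ^ 2 / 4) := by
    intro x
    have hx : (0:ℝ) ≤ |x| := abs_nonneg x
    have he : (1:ℝ) ≤ Real.exp (x ^ 2 / 4) := by
      rw [← Real.exp_zero]
      exact Real.exp_le_exp.2 (by positivity)
    have h1 : (1 + |x|) ^ q ≤ 2 ^ q * (1 + |x| ^ q) := by
      have h2 : (1 + |x|) ≤ 2 * max 1 |x| := by
        rcases le_total 1 |x| with h | h
        · rw [max_eq_right h]; linarith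
        · rw [max_eq_left h]; linarith
      calc (1 + |x|) ^ q ≤ (2 * max 1 |x|) ^ q := pow_le_pow_left₀ (by positivity) h2 q
      _ = 2 ^ q * (max 1 |x|) ^ q := mul_pow _ _ _
      _ ≤ 2 ^ q * (1 + |x| ^ q) := by
          gcongr
          rcases le_total 1 |x| with h | h
          · rw [max_eq_right h]; nlinarith [pow_nonneg hx q]
          · rw [max_eq_left h, one_pow]
            have := pow_nonneg hx q
            linarith
    have h3 : |x| ^ q ≤ 1 + (x ^ 2) ^ q := by
      rcases le_total (|x|) 1 with h | h
      · have : |x| ^ q ≤ 1 := pow_le_one₀ hx h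
        nlinarith [pow_nonneg (sq_nonneg x) q]
      · have h4 : |x| ^ q ≤ |x| ^ (2 * q) := pow_le_pow_right₀ h (by omega)
        have h5 : |x| ^ (2 * q) = (x ^ 2) ^ q := by
          rw [pow_mul, sq_abs]
        linarith
    have h6 : (x ^ 2) ^ q ≤ (q.factorial : ℝ) * 4 ^ q * Real.exp (x ^ 2 / 4) := by
      have h7 : (x ^ 2 / 4) ^ q / (q.factorial : ℝ) ≤ Real.exp (x ^ 2 / 4) := by
        have h8 := Real.sum_le_exp_of_nonneg (x := x ^ 2 / 4) (by positivity) (q + 1)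
        refine le_trans ?_ h8
        exact Finset.single_le_sum (f := fun i => (x ^ 2 / 4) ^ i / (i.factorial : ℝ))
          (fun i _ => by positivity) (Finset.self_mem_range_succ q)
      have h9 : (0:ℝ) < (q.factorial : ℝ) := by
        exact_mod_cast Nat.factorial_pos q
      have h10 : (x ^ 2) ^ q = 4 ^ q * (x ^ 2 / 4) ^ q := by
        rw [div_pow]
        field_simp
      rw [h10]
      calc 4 ^ q * (x ^ 2 / 4) ^ q
          ≤ 4 ^ q * ((q.factorial : ℝ) * Real.exp (x ^ 2 / 4)) := by
            gcongr
            rw [div_le_iff₀ h9] at h7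
            linarith
      _ = (q.factorial : ℝ) * 4 ^ q * Real.exp (x ^ 2 / 4) := by ring
    have hfq : (0:ℝ) ≤ (q.factorial : ℝ) := by positivity
    calc (1 + |x|) ^ q ≤ 2 ^ q * (1 + |x| ^ q) := h1
    _ ≤ 2 ^ q * (2 + (q.factorial : ℝ) * 4 ^ q * Real.exp (x ^ 2 / 4)) := by
        have h2q : (0:ℝ) ≤ 2 ^ q := by positivity
        have : |x| ^ q ≤ 1 + (q.factorial : ℝ) * 4 ^ q * Real.exp (x ^ 2 / 4) := by linarith
        nlinarith
    _ ≤ (2 ^ q * (2 + (q.factorial : ℝ) * 4 ^ q)) * Real.exp (x ^ 2 / 4) := by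
        have h11 : (0:ℝ) < 2 ^ q := by positivity
        have h12 : (0:ℝ) ≤ (4:ℝ) ^ q := by positivity
        nlinarith [Real.exp_pos (x ^ 2 / 4), mul_nonneg hfq h12]
  have hint : Integrable (fun x : ℝ => Real.exp (-(1/4 : ℝ) * x ^ 2)) volume :=
    integrable_exp_neg_mul_sq (by norm_num)
  refine (hint.const_mul (2 ^ q * (2 + (q.factorial : ℝ) * 4 ^ q))).mono'
    (Continuous.aestronglyMeasurable (by continuity)) (ae_of_all _ fun x => ?_)
  rw [Real.norm_eq_abs, abs_of_nonneg (by positivity)]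
  have h13 := key x
  have h14 : Real.exp (x ^ 2 / 4) * Real.exp (-(x ^ 2) / 2) = Real.exp (-(1/4 : ℝ) * x ^ 2) := by
    rw [← Real.exp_add]; ring_nf
  calc (1 + |x|) ^ q * Real.exp (-(x ^ 2) / 2)
      ≤ (2 ^ q * (2 + (q.factorial : ℝ) * 4 ^ q)) * Real.exp (x ^ 2 / 4) *
        Real.exp (-(x ^ 2) / 2) := by
        exact mul_le_mul_of_nonneg_right h13 (Real.exp_pos _).le
  _ = (2 ^ q * (2 + (q.factorial : ℝ) * 4 ^ q)) * Real.exp (-(1/4 : ℝ) * x ^ 2) := by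
        rw [mul_assoc, h14]
open scoped ENNReal NNReal

lemma pdf01 (x : ℝ) :
    gaussianPDFReal 0 1 x = (Real.sqrt (2 * π))⁻¹ * rexp (-(x ^ 2) / 2) := by
  rw [gaussianPDFReal]
  norm_num

lemma pdf01_cont : Continuous (gaussianPDFReal 0 1) := by
  have : gaussianPDFReal 0 1 = fun x => (Real.sqrt (2 * π))⁻¹ * rexp (-(x ^ 2) / 2) :=
    funext pdf01
  rw [this]
  exact continuous_const.mul (Real.continuous_exp.comp (by fun_prop))

lemma gr_eq : gaussianReal 0 1
    = volume.withDensity fun x => ENNReal.ofReal (gaussianPDFReal 0 1 x) := by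
  rw [gaussianReal_of_var_ne_zero _ one_ne_zero, gaussianPDF_def]

lemma integral_gr (f : ℝ → ℝ) :
    ∫ x, f x ∂(gaussianReal 0 1) = ∫ x, gaussianPDFReal 0 1 x * f x := by
  rw [gr_eq]
  have h1 : (fun x => ENNReal.ofReal (gaussianPDFReal 0 1 x))
      = fun x => ((gaussianPDFReal 0 1 x).toNNReal : ℝ≥0∞) := rfl
  rw [h1, integral_withDensity_eq_integral_smul
    ((measurable_gaussianPDFReal 0 1).real_toNNReal) f]
  congr 1
  ext x
  rw [NNReal.smul_def, Real.coe_toNNReal _ (gaussianPDFReal_nonneg 0 1 x), smul_eq_mul]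

lemma integrable_gr_iff (f : ℝ → ℝ) :
    Integrable f (gaussianReal 0 1)
      ↔ Integrable (fun x => gaussianPDFReal 0 1 x * f x) volume := by
  rw [gr_eq]
  have h1 : (fun x => ENNReal.ofReal (gaussianPDFReal 0 1 x))
      = fun x => ((gaussianPDFReal 0 1 x).toNNReal : ℝ≥0∞) := rfl
  rw [h1, integrable_withDensity_iff_integrable_smul
    ((measurable_gaussianPDFReal 0 1).real_toNNReal)]
  constructor <;> intro h2 <;> refine h2.congr (ae_of_all _ fun x => ?_) <;>
    simp only [NNReal.smul_def, Real.coe_toNNReal _ (gaussianPDFReal_nonneg 0 1 x),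
      smul_eq_mul]

lemma integrable_gr_of_le (f : ℝ → ℝ) (hf : Continuous f) (C : ℝ) (q : ℕ)
    (hb : ∀ x, |f x| ≤ C * (1 + |x|) ^ q) : Integrable f (gaussianReal 0 1) := by
  rw [integrable_gr_iff]
  have hc0 : (0:ℝ) ≤ (Real.sqrt (2 * π))⁻¹ := by positivity
  refine ((integrable_poly_gauss q).const_mul (C * (Real.sqrt (2 * π))⁻¹)).mono'
    (Continuous.aestronglyMeasurable (pdf01_cont.mul hf)) (ae_of_all _ fun x => ?_)
  rw [Real.norm_eq_abs, abs_mul, pdf01]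
  have he : (0:ℝ) < rexp (-(x ^ 2) / 2) := Real.exp_pos _
  rw [abs_of_nonneg (a := (Real.sqrt (2 * π))⁻¹ * rexp (-(x ^ 2) / 2)) (by positivity)]
  calc (Real.sqrt (2 * π))⁻¹ * rexp (-(x ^ 2) / 2) * |f x|
      ≤ (Real.sqrt (2 * π))⁻¹ * rexp (-(x ^ 2) / 2) * (C * (1 + |x|) ^ q) :=
        mul_le_mul_of_nonneg_left (hb x) (by positivity)
  _ = C * (Real.sqrt (2 * π))⁻¹ * ((1 + |x|) ^ q * rexp (-(x ^ 2) / 2)) := by ring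

lemma stein1 (f f' : ℝ → ℝ) (hder : ∀ x, HasDerivAt f (f' x) x) (hc' : Continuous f')
    (C : ℝ) (q : ℕ) (hb : ∀ x, |f x| ≤ C * (1 + |x|) ^ q)
    (hb' : ∀ x, |f' x| ≤ C * (1 + |x|) ^ q) :
    ∫ x, f x * x ∂(gaussianReal 0 1) = ∫ x, f' x ∂(gaussianReal 0 1) := by
  have hC : 0 ≤ C := by
    have h0 := hb 0
    simp only [abs_zero, add_zero, one_pow, mul_one] at h0
    exact le_trans (abs_nonneg _) h0
  have hcf : Continuous f := by
    rw [continuous_iff_continuousAt]; exact fun x => (hder x).continuousAt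
  have hc0 : (0:ℝ) ≤ (Real.sqrt (2 * π))⁻¹ := by positivity
  set c : ℝ := (Real.sqrt (2 * π))⁻¹ with hcdef
  have hce : Continuous fun x : ℝ => rexp (-(x ^ 2) / 2) :=
    Real.continuous_exp.comp (by fun_prop)
  set v : ℝ → ℝ := fun x => -(c * rexp (-(x ^ 2) / 2)) with hv
  set v' : ℝ → ℝ := fun x => c * (x * rexp (-(x ^ 2) / 2)) with hv'
  have hvd : ∀ x, HasDerivAt v (v' x) x := by
    intro x
    have h1 : HasDerivAt (fun x : ℝ => -(x ^ 2) / 2) (-x) x := by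
      have := ((hasDerivAt_pow 2 x).neg).div_const 2
      refine this.congr_deriv ?_
      simp
      ring
    have h2 : HasDerivAt (fun x : ℝ => rexp (-(x ^ 2) / 2))
        (rexp (-(x ^ 2) / 2) * (-x)) x := h1.exp
    have h3 := (h2.const_mul c).neg
    refine h3.congr_deriv ?_
    rw [hv']
    ring
  have hmaj : Integrable (fun x : ℝ => (C * c) * ((1 + |x|) ^ (q + 1)
      * rexp (-(x ^ 2) / 2))) volume := (integrable_poly_gauss (q + 1)).const_mul _
  have bound : ∀ (φ : ℝ → ℝ) (x : ℝ), (∀ y, |φ y| ≤ C * (1 + |y|) ^ q) →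
      |φ x| * (c * ((1 + |x|) * rexp (-(x ^ 2) / 2)))
        ≤ C * c * ((1 + |x|) ^ (q + 1) * rexp (-(x ^ 2) / 2)) := by
    intro φ x hφ
    have he : (0:ℝ) < rexp (-(x ^ 2) / 2) := Real.exp_pos _
    have hx : (0:ℝ) ≤ |x| := abs_nonneg x
    calc |φ x| * (c * ((1 + |x|) * rexp (-(x ^ 2) / 2)))
        ≤ (C * (1 + |x|) ^ q) * (c * ((1 + |x|) * rexp (-(x ^ 2) / 2))) :=
          mul_le_mul_of_nonneg_right (hφ x) (by positivity)
    _ = C * c * ((1 + |x|) ^ (q + 1) * rexp (-(x ^ 2) / 2)) := by ring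
  have huv' : Integrable (f * v') volume := by
    refine hmaj.mono' (Continuous.aestronglyMeasurable
      (hcf.mul (continuous_const.mul (continuous_id.mul hce)))) (ae_of_all _ fun x => ?_)
    have he : (0:ℝ) < rexp (-(x ^ 2) / 2) := Real.exp_pos _
    have hx : (0:ℝ) ≤ |x| := abs_nonneg x
    refine le_trans ?_ (bound f x hb)
    simp only [Pi.mul_apply, Real.norm_eq_abs, hv', abs_mul]
    rw [abs_of_nonneg hc0, abs_of_nonneg he.le]
    have h5 : (0:ℝ) ≤ |f x| := abs_nonneg _
    have h6 : |x| ≤ 1 + |x| := by linarith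
    gcongr
  have hu'v : Integrable (f' * v) volume := by
    refine hmaj.mono' (Continuous.aestronglyMeasurable
      (hc'.mul (continuous_const.mul hce).neg)) (ae_of_all _ fun x => ?_)
    have he : (0:ℝ) < rexp (-(x ^ 2) / 2) := Real.exp_pos _
    have hx : (0:ℝ) ≤ |x| := abs_nonneg x
    refine le_trans ?_ (bound f' x hb')
    simp only [Pi.mul_apply, Real.norm_eq_abs, hv, abs_mul, abs_neg]
    rw [abs_of_nonneg hc0, abs_of_nonneg he.le]
    have h5 : (0:ℝ) ≤ |f' x| := abs_nonneg _
    have h7 : c * rexp (-(x ^ 2) / 2) ≤ c * ((1 + |x|) * rexp (-(x ^ 2) / 2)) := by nlinarith [mul_nonneg hc0 (mul_nonneg hx he.le)]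
    exact mul_le_mul_of_nonneg_left h7 h5
  have huv : Integrable (f * v) volume := by
    refine hmaj.mono' (Continuous.aestronglyMeasurable
      (hcf.mul (continuous_const.mul hce).neg)) (ae_of_all _ fun x => ?_)
    have he : (0:ℝ) < rexp (-(x ^ 2) / 2) := Real.exp_pos _
    have hx : (0:ℝ) ≤ |x| := abs_nonneg x
    refine le_trans ?_ (bound f x hb)
    simp only [Pi.mul_apply, Real.norm_eq_abs, hv, abs_mul, abs_neg]
    rw [abs_of_nonneg hc0, abs_of_nonneg he.le]
    have h5 : (0:ℝ) ≤ |f x| := abs_nonneg _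
    have h7 : c * rexp (-(x ^ 2) / 2) ≤ c * ((1 + |x|) * rexp (-(x ^ 2) / 2)) := by nlinarith [mul_nonneg hc0 (mul_nonneg hx he.le)]
    exact mul_le_mul_of_nonneg_left h7 h5
  have hparts := integral_mul_deriv_eq_deriv_mul_of_integrable (fun x _ => hder x) (fun x _ => hvd x) huv' hu'v huv
  rw [integral_gr (fun x => f x * x), integral_gr f']
  have hL : ∫ x, gaussianPDFReal 0 1 x * (f x * x) = ∫ x, f x * v' x := by
    congr 1
    ext x
    rw [pdf01]
    simp only [hv']
    ring
  have hR : ∫ x, gaussianPDFReal 0 1 x * f' x = -∫ x, f' x * v x := by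
    rw [← integral_neg]
    congr 1
    ext x
    rw [pdf01]
    simp only [hv]
    ring
  rw [hL, hR, hparts]

lemma stdGaussian_succ_mp (n : ℕ) (k : Fin (n + 1)) :
    MeasurePreserving (MeasurableEquiv.piFinSuccAbove (fun _ : Fin (n + 1) => ℝ) k)
      (stdGaussian (n + 1)) ((gaussianReal 0 1).prod (stdGaussian n)) := by
  rw [_root_.stdGaussian, _root_.stdGaussian]
  exact measurePreserving_piFinSuccAbove (fun _ => gaussianReal 0 1) k

lemma integral_insertNth (n : ℕ) (k : Fin (n + 1)) (G : (Fin (n + 1) → ℝ) → ℝ) :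
    ∫ x, G x ∂(stdGaussian (n + 1))
      = ∫ z : ℝ × (Fin n → ℝ), G (k.insertNth z.1 z.2)
          ∂((gaussianReal 0 1).prod (stdGaussian n)) := by
  rw [← ((stdGaussian_succ_mp n k).symm _).integral_comp
    (MeasurableEquiv.measurableEmbedding _) G]
  refine integral_congr_ae (ae_of_all _ fun z => ?_)
  rfl

lemma integrable_iff_insertNth (n : ℕ) (k : Fin (n + 1)) (G : (Fin (n + 1) → ℝ) → ℝ) :
    Integrable G (stdGaussian (n + 1))
      ↔ Integrable (fun z : ℝ × (Fin n → ℝ) => G (k.insertNth z.1 z.2))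
          ((gaussianReal 0 1).prod (stdGaussian n)) := by
  rw [← ((stdGaussian_succ_mp n k).symm _).integrable_comp_emb
    (MeasurableEquiv.measurableEmbedding _)]
  constructor <;> intro h2 <;> refine h2.congr (ae_of_all _ fun z => ?_) <;> rfl

lemma bf_insertNth {n N : ℕ} (k : Fin (n + 1)) (t : ℝ) (y : Fin n → ℝ) :
    bf N (k.insertNth t y) = (1 + |t|) ^ N * bf N y := by
  rw [bf, bf]
  refine (Fin.prod_univ_succAbove _ k).trans ?_
  congr 1
  · rw [Fin.insertNth_apply_same]
  · exact Finset.prod_congr rfl fun m _ => by rw [Fin.insertNth_apply_succAbove]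

lemma integrable_bf {n N : ℕ} : Integrable (fun x => bf N x) (stdGaussian n) := by
  induction n with
  | zero =>
    have : (fun x : Fin 0 → ℝ => bf N x) = fun _ => (1:ℝ) := by
      funext x; rw [bf]; simp
    rw [this]
    exact integrable_const 1
  | succ n ih =>
    rw [integrable_iff_insertNth n 0]
    have h1 : Integrable (fun t : ℝ => (1 + |t|) ^ N) (gaussianReal 0 1) :=
      integrable_gr_of_le _ (by continuity) 1 N fun x => by
        rw [abs_of_nonneg (by positivity), one_mul]
    have h2 := h1.mul_prod ih (L := ℝ)
    refine h2.congr (ae_of_all _ fun z => ?_)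
    exact (bf_insertNth 0 z.1 z.2).symm

lemma integrable_of_le_bf {n : ℕ} {F : (Fin n → ℝ) → ℝ} (hF : Continuous F)
    (C : ℝ) (N : ℕ) (hb : ∀ x, |F x| ≤ C * bf N x) : Integrable F (stdGaussian n) :=
  (integrable_bf.const_mul C).mono' hF.aestronglyMeasurable
    (ae_of_all _ fun x => by rw [Real.norm_eq_abs]; exact hb x)

lemma stein_coord {n : ℕ} (k : Fin (n + 1)) (F F' : (Fin (n + 1) → ℝ) → ℝ)
    (hF : Continuous F) (hF' : Continuous F')
    (hd : ∀ (y : Fin n → ℝ) (t : ℝ),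
      HasDerivAt (fun s => F (k.insertNth s y)) (F' (k.insertNth t y)) t)
    (C : ℝ) (N : ℕ) (hb : ∀ x, |F x| ≤ C * bf N x) (hb' : ∀ x, |F' x| ≤ C * bf N x) :
    ∫ x, F x * x k ∂(stdGaussian (n + 1)) = ∫ x, F' x ∂(stdGaussian (n + 1)) := by
  have hC : 0 ≤ C := by
    have h0 := hb 0
    have h1 : bf N (0 : Fin (n + 1) → ℝ) = 1 := by rw [bf]; simp
    rw [h1, mul_one] at h0
    exact le_trans (abs_nonneg _) h0
  have hint1 : Integrable (fun x => F x * x k) (stdGaussian (n + 1)) := by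
    refine integrable_of_le_bf (hF.mul (continuous_apply k)) C (N + 1) fun x => ?_
    rw [abs_mul]
    have hstep : |F x| * |x k| ≤ (C * bf N x) * bf 1 x :=
      mul_le_mul (hb x) (abs_coord_le_bf x k) (abs_nonneg _) (mul_nonneg hC (bf_nonneg x))
    rw [mul_assoc, bf_mul] at hstep
    exact hstep
  have hint2 : Integrable F' (stdGaussian (n + 1)) := integrable_of_le_bf hF' C N hb'
  rw [integral_insertNth n k (fun x => F x * x k), integral_insertNth n k F']
  rw [integral_prod_symm _ ((integrable_iff_insertNth n k _).1 hint1),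
    integral_prod_symm _ ((integrable_iff_insertNth n k _).1 hint2)]
  refine integral_congr_ae (ae_of_all _ fun y => ?_)
  simp only [Fin.insertNth_apply_same]
  have hcont : Continuous fun t : ℝ => (k.insertNth t y : Fin (n + 1) → ℝ) := by
    apply continuous_pi
    intro l
    refine k.succAboveCases ?_ ?_ l
    · simp only [Fin.insertNth_apply_same]
      exact continuous_id
    · intro m
      simp only [Fin.insertNth_apply_succAbove]
      exact continuous_const
  exact stein1 (fun t => F (k.insertNth t y)) (fun t => F' (k.insertNth t y))
    (hd y) (hF'.comp hcont) (C * bf N y) N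
    (fun t => by rw [show C * bf N y * (1 + |t|) ^ N = C * ((1 + |t|) ^ N * bf N y) by ring,
      ← bf_insertNth]; exact hb _)
    (fun t => by rw [show C * bf N y * (1 + |t|) ^ N = C * ((1 + |t|) ^ N * bf N y) by ring,
      ← bf_insertNth]; exact hb' _)

lemma dot_insertNth {n : ℕ} (u : Fin (n + 1) → ℝ) (k : Fin (n + 1)) (s : ℝ) (y : Fin n → ℝ) :
    ∑ l, u l * (k.insertNth s y : Fin (n + 1) → ℝ) l
      = u k * s + ∑ m, u (k.succAbove m) * y m := by
  refine (Fin.sum_univ_succAbove _ k).trans ?_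
  congr 1
  · rw [Fin.insertNth_apply_same]
  · exact Finset.sum_congr rfl fun m _ => by rw [Fin.insertNth_apply_succAbove]

lemma cont_dot {n : ℕ} (u : Fin n → ℝ) : Continuous fun x : Fin n → ℝ => ∑ l, u l * x l :=
  continuous_finset_sum _ fun l _ => continuous_const.mul (continuous_apply l)

lemma nonneg_of_bound {f : ℝ → ℝ} {C : ℝ} {q : ℕ} (hb : ∀ x, |f x| ≤ C * (1 + |x|) ^ q) :
    0 ≤ C := by
  have h0 := hb 0
  simp only [abs_zero, add_zero, one_pow, mul_one] at h0
  exact le_trans (abs_nonneg _) h0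

lemma stein_M1 {n : ℕ} (v w : Fin (n + 1) → ℝ) (φ ψ : ℝ → ℝ)
    (hφ : Differentiable ℝ φ) (hψ : Differentiable ℝ ψ)
    (hφ' : Continuous (deriv φ)) (hψ' : Continuous (deriv ψ))
    (Cφ : ℝ) (qφ : ℕ) (hbφ : ∀ x, |φ x| ≤ Cφ * (1 + |x|) ^ qφ)
    (hbφ' : ∀ x, |deriv φ x| ≤ Cφ * (1 + |x|) ^ qφ)
    (Cψ : ℝ) (qψ : ℕ) (hbψ : ∀ x, |ψ x| ≤ Cψ * (1 + |x|) ^ qψ)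
    (hbψ' : ∀ x, |deriv ψ x| ≤ Cψ * (1 + |x|) ^ qψ)
    (k : Fin (n + 1)) :
    ∫ x, φ (∑ l, v l * x l) * ψ (∑ l, w l * x l) * x k ∂(stdGaussian (n + 1))
      = v k * ∫ x, deriv φ (∑ l, v l * x l) * ψ (∑ l, w l * x l) ∂(stdGaussian (n + 1))
        + w k * ∫ x, φ (∑ l, v l * x l) * deriv ψ (∑ l, w l * x l) ∂(stdGaussian (n + 1)) := by
  have hCφ0 : 0 ≤ Cφ := nonneg_of_bound hbφ
  have hCψ0 : 0 ≤ Cψ := nonneg_of_bound hbψ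
  set Q := qφ + qψ with hQ
  obtain ⟨Kv, hKv0, hKv⟩ := abs_dot_pow_le v Q
  obtain ⟨Kw, hKw0, hKw⟩ := abs_dot_pow_le w Q
  set M0 : ℝ := Cφ * Cψ * (Kv * Kw) with hM0
  have hM00 : 0 ≤ M0 := by positivity
  have master : ∀ (α β : ℝ → ℝ), (∀ t, |α t| ≤ Cφ * (1 + |t|) ^ qφ) →
      (∀ t, |β t| ≤ Cψ * (1 + |t|) ^ qψ) →
      ∀ x : Fin (n + 1) → ℝ,
        |α (∑ l, v l * x l) * β (∑ l, w l * x l)| ≤ M0 * bf (Q + Q) x := by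
    intro α β hα hβ x
    have h1 : (1:ℝ) ≤ 1 + |∑ l, v l * x l| := by linarith [abs_nonneg (∑ l, v l * x l)]
    have h2 : (1:ℝ) ≤ 1 + |∑ l, w l * x l| := by linarith [abs_nonneg (∑ l, w l * x l)]
    rw [abs_mul]
    calc |α (∑ l, v l * x l)| * |β (∑ l, w l * x l)|
        ≤ (Cφ * (1 + |∑ l, v l * x l|) ^ qφ) * (Cψ * (1 + |∑ l, w l * x l|) ^ qψ) :=
          mul_le_mul (hα _) (hβ _) (abs_nonneg _) (by positivity)
    _ ≤ (Cφ * (1 + |∑ l, v l * x l|) ^ Q) * (Cψ * (1 + |∑ l, w l * x l|) ^ Q) := by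
          have h1p : (1 + |∑ l, v l * x l|) ^ qφ ≤ (1 + |∑ l, v l * x l|) ^ Q :=
            pow_le_pow_right₀ h1 (by rw [hQ]; omega)
          have h2p : (1 + |∑ l, w l * x l|) ^ qψ ≤ (1 + |∑ l, w l * x l|) ^ Q :=
            pow_le_pow_right₀ h2 (by rw [hQ]; omega)
          exact mul_le_mul (mul_le_mul_of_nonneg_left h1p hCφ0)
            (mul_le_mul_of_nonneg_left h2p hCψ0) (mul_nonneg hCψ0 (by positivity))
            (mul_nonneg hCφ0 (by positivity))
    _ ≤ (Cφ * (Kv * bf Q x)) * (Cψ * (Kw * bf Q x)) :=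
          mul_le_mul (mul_le_mul_of_nonneg_left (hKv x) hCφ0)
            (mul_le_mul_of_nonneg_left (hKw x) hCψ0) (mul_nonneg hCψ0 (by positivity))
            (mul_nonneg hCφ0 (mul_nonneg hKv0 (bf_nonneg x)))
    _ = M0 * (bf Q x * bf Q x) := by rw [hM0]; ring
    _ = M0 * bf (Q + Q) x := by rw [bf_mul]
  set A : (Fin (n + 1) → ℝ) → ℝ :=
    fun x => deriv φ (∑ l, v l * x l) * ψ (∑ l, w l * x l) with hA
  set B : (Fin (n + 1) → ℝ) → ℝ :=
    fun x => φ (∑ l, v l * x l) * deriv ψ (∑ l, w l * x l) with hB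
  set F : (Fin (n + 1) → ℝ) → ℝ :=
    fun x => φ (∑ l, v l * x l) * ψ (∑ l, w l * x l) with hF
  set F' : (Fin (n + 1) → ℝ) → ℝ := fun x => v k * A x + w k * B x with hF'
  have hcA : Continuous A := (hφ'.comp (cont_dot v)).mul (hψ.continuous.comp (cont_dot w))
  have hcB : Continuous B := (hφ.continuous.comp (cont_dot v)).mul (hψ'.comp (cont_dot w))
  have hcF : Continuous F := (hφ.continuous.comp (cont_dot v)).mul (hψ.continuous.comp (cont_dot w))
  have hcF' : Continuous F' := (continuous_const.mul hcA).add (continuous_const.mul hcB)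
  have hbF : ∀ x, |F x| ≤ M0 * bf (Q + Q) x := master φ ψ hbφ hbψ
  have hbA : ∀ x, |A x| ≤ M0 * bf (Q + Q) x := master (deriv φ) ψ hbφ' hbψ
  have hbB : ∀ x, |B x| ≤ M0 * bf (Q + Q) x := master φ (deriv ψ) hbφ hbψ'
  have hintA : Integrable A (stdGaussian (n + 1)) := integrable_of_le_bf hcA _ _ hbA
  have hintB : Integrable B (stdGaussian (n + 1)) := integrable_of_le_bf hcB _ _ hbB
  set C : ℝ := (1 + |v k| + |w k|) * M0 with hC
  have hbF2 : ∀ x, |F x| ≤ C * bf (Q + Q) x := by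
    intro x
    refine le_trans (hbF x) ?_
    rw [hC]
    have h6 := bf_nonneg (N := Q + Q) x
    nlinarith [abs_nonneg (v k), abs_nonneg (w k), mul_nonneg hM00 h6,
      mul_nonneg (abs_nonneg (v k)) (mul_nonneg hM00 h6),
      mul_nonneg (abs_nonneg (w k)) (mul_nonneg hM00 h6)]
  have hbF' : ∀ x, |F' x| ≤ C * bf (Q + Q) x := by
    intro x
    rw [hF']
    have h3 := abs_add_le (v k * A x) (w k * B x)
    have h4 : |v k * A x| ≤ |v k| * (M0 * bf (Q + Q) x) := by
      rw [abs_mul]; exact mul_le_mul_of_nonneg_left (hbA x) (abs_nonneg _)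
    have h5 : |w k * B x| ≤ |w k| * (M0 * bf (Q + Q) x) := by
      rw [abs_mul]; exact mul_le_mul_of_nonneg_left (hbB x) (abs_nonneg _)
    have h6 := bf_nonneg (N := Q + Q) x
    rw [hC]
    calc |v k * A x + w k * B x| ≤ |v k * A x| + |w k * B x| := abs_add_le _ _
    _ ≤ |v k| * (M0 * bf (Q + Q) x) + |w k| * (M0 * bf (Q + Q) x) := add_le_add h4 h5
    _ ≤ (1 + |v k| + |w k|) * M0 * bf (Q + Q) x := by nlinarith [mul_nonneg hM00 h6]
  have hd : ∀ (y : Fin n → ℝ) (t : ℝ),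
      HasDerivAt (fun s => F (k.insertNth s y)) (F' (k.insertNth t y)) t := by
    intro y t
    set av := ∑ m, v (k.succAbove m) * y m with hav
    set bv := ∑ m, w (k.succAbove m) * y m with hbv
    have hfn : (fun s => F (k.insertNth s y))
        = fun s => φ (v k * s + av) * ψ (w k * s + bv) := by
      funext s
      rw [hF]
      simp only
      rw [dot_insertNth v k s y, dot_insertNth w k s y]
    have h1 : HasDerivAt (fun s : ℝ => v k * s + av) (v k) t := by
      simpa using ((hasDerivAt_id t).const_mul (v k)).add_const av
    have h2 : HasDerivAt (fun s : ℝ => w k * s + bv) (w k) t := by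
      simpa using ((hasDerivAt_id t).const_mul (w k)).add_const bv
    have h3 : HasDerivAt (fun s => φ (v k * s + av)) (deriv φ (v k * t + av) * v k) t :=
      ((hφ (v k * t + av)).hasDerivAt).comp t h1
    have h4 : HasDerivAt (fun s => ψ (w k * s + bv)) (deriv ψ (w k * t + bv) * w k) t :=
      ((hψ (w k * t + bv)).hasDerivAt).comp t h2
    have h5 := h3.mul h4
    rw [hfn]
    refine h5.congr_deriv ?_
    rw [hF']
    simp only [hA, hB]
    rw [dot_insertNth v k t y, dot_insertNth w k t y]
    ring
  have hmain := stein_coord k F F' hcF hcF' hd C (Q + Q) hbF2 hbF'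
  rw [hmain]
  have hsplit : ∫ x, F' x ∂(stdGaussian (n + 1))
      = v k * ∫ x, A x ∂(stdGaussian (n + 1)) + w k * ∫ x, B x ∂(stdGaussian (n + 1)) := by
    rw [hF']
    rw [integral_add ((hintA.const_mul (v k))) ((hintB.const_mul (w k))),
      integral_const_mul, integral_const_mul]
  exact hsplit

lemma stein_M2 {n : ℕ} (v w : Fin (n + 1) → ℝ) (φ ψ : ℝ → ℝ)
    (hφ : Differentiable ℝ φ) (hψ : Differentiable ℝ ψ)
    (hφ' : Continuous (deriv φ)) (hψ' : Continuous (deriv ψ))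
    (Cφ : ℝ) (qφ : ℕ) (hbφ : ∀ x, |φ x| ≤ Cφ * (1 + |x|) ^ qφ)
    (hbφ' : ∀ x, |deriv φ x| ≤ Cφ * (1 + |x|) ^ qφ)
    (Cψ : ℝ) (qψ : ℕ) (hbψ : ∀ x, |ψ x| ≤ Cψ * (1 + |x|) ^ qψ)
    (hbψ' : ∀ x, |deriv ψ x| ≤ Cψ * (1 + |x|) ^ qψ)
    (i k : Fin (n + 1)) :
    ∫ x, φ (∑ l, v l * x l) * ψ (∑ l, w l * x l) * x i * x k ∂(stdGaussian (n + 1))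
      = v k * ∫ x, deriv φ (∑ l, v l * x l) * ψ (∑ l, w l * x l) * x i ∂(stdGaussian (n + 1))
        + w k * ∫ x, φ (∑ l, v l * x l) * deriv ψ (∑ l, w l * x l) * x i ∂(stdGaussian (n + 1))
        + (if i = k then (1:ℝ) else 0) *
            ∫ x, φ (∑ l, v l * x l) * ψ (∑ l, w l * x l) ∂(stdGaussian (n + 1)) := by
  have hCφ0 : 0 ≤ Cφ := nonneg_of_bound hbφ
  have hCψ0 : 0 ≤ Cψ := nonneg_of_bound hbψ
  set Q := qφ + qψ with hQ
  obtain ⟨Kv, hKv0, hKv⟩ := abs_dot_pow_le v Q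
  obtain ⟨Kw, hKw0, hKw⟩ := abs_dot_pow_le w Q
  set M0 : ℝ := Cφ * Cψ * (Kv * Kw) with hM0
  have hM00 : 0 ≤ M0 := by positivity
  have master : ∀ (α β : ℝ → ℝ), (∀ t, |α t| ≤ Cφ * (1 + |t|) ^ qφ) →
      (∀ t, |β t| ≤ Cψ * (1 + |t|) ^ qψ) →
      ∀ x : Fin (n + 1) → ℝ,
        |α (∑ l, v l * x l) * β (∑ l, w l * x l)| ≤ M0 * bf (Q + Q) x := by
    intro α β hα hβ x
    have h1 : (1:ℝ) ≤ 1 + |∑ l, v l * x l| := by linarith [abs_nonneg (∑ l, v l * x l)]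
    have h2 : (1:ℝ) ≤ 1 + |∑ l, w l * x l| := by linarith [abs_nonneg (∑ l, w l * x l)]
    rw [abs_mul]
    calc |α (∑ l, v l * x l)| * |β (∑ l, w l * x l)|
        ≤ (Cφ * (1 + |∑ l, v l * x l|) ^ qφ) * (Cψ * (1 + |∑ l, w l * x l|) ^ qψ) :=
          mul_le_mul (hα _) (hβ _) (abs_nonneg _) (by positivity)
    _ ≤ (Cφ * (1 + |∑ l, v l * x l|) ^ Q) * (Cψ * (1 + |∑ l, w l * x l|) ^ Q) := by
          have h1p : (1 + |∑ l, v l * x l|) ^ qφ ≤ (1 + |∑ l, v l * x l|) ^ Q :=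
            pow_le_pow_right₀ h1 (by rw [hQ]; omega)
          have h2p : (1 + |∑ l, w l * x l|) ^ qψ ≤ (1 + |∑ l, w l * x l|) ^ Q :=
            pow_le_pow_right₀ h2 (by rw [hQ]; omega)
          exact mul_le_mul (mul_le_mul_of_nonneg_left h1p hCφ0)
            (mul_le_mul_of_nonneg_left h2p hCψ0) (mul_nonneg hCψ0 (by positivity))
            (mul_nonneg hCφ0 (by positivity))
    _ ≤ (Cφ * (Kv * bf Q x)) * (Cψ * (Kw * bf Q x)) :=
          mul_le_mul (mul_le_mul_of_nonneg_left (hKv x) hCφ0)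
            (mul_le_mul_of_nonneg_left (hKw x) hCψ0) (mul_nonneg hCψ0 (by positivity))
            (mul_nonneg hCφ0 (mul_nonneg hKv0 (bf_nonneg x)))
    _ = M0 * (bf Q x * bf Q x) := by rw [hM0]; ring
    _ = M0 * bf (Q + Q) x := by rw [bf_mul]
  have masteri : ∀ (α β : ℝ → ℝ), (∀ t, |α t| ≤ Cφ * (1 + |t|) ^ qφ) →
      (∀ t, |β t| ≤ Cψ * (1 + |t|) ^ qψ) →
      ∀ x : Fin (n + 1) → ℝ,
        |α (∑ l, v l * x l) * β (∑ l, w l * x l) * x i| ≤ M0 * bf (Q + Q + 1) x := by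
    intro α β hα hβ x
    rw [abs_mul]
    calc |α (∑ l, v l * x l) * β (∑ l, w l * x l)| * |x i|
        ≤ (M0 * bf (Q + Q) x) * bf 1 x :=
          mul_le_mul (master α β hα hβ x) (abs_coord_le_bf x i) (abs_nonneg _)
            (mul_nonneg hM00 (bf_nonneg x))
    _ = M0 * bf (Q + Q + 1) x := by rw [mul_assoc, bf_mul]
  set A : (Fin (n + 1) → ℝ) → ℝ :=
    fun x => deriv φ (∑ l, v l * x l) * ψ (∑ l, w l * x l) * x i with hA
  set B : (Fin (n + 1) → ℝ) → ℝ :=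
    fun x => φ (∑ l, v l * x l) * deriv ψ (∑ l, w l * x l) * x i with hB
  set F0 : (Fin (n + 1) → ℝ) → ℝ :=
    fun x => φ (∑ l, v l * x l) * ψ (∑ l, w l * x l) with hF0
  set F : (Fin (n + 1) → ℝ) → ℝ := fun x => F0 x * x i with hF
  set F' : (Fin (n + 1) → ℝ) → ℝ :=
    fun x => v k * A x + w k * B x + (if i = k then (1:ℝ) else 0) * F0 x with hF'
  have hcA : Continuous A := ((hφ'.comp (cont_dot v)).mul
    (hψ.continuous.comp (cont_dot w))).mul (continuous_apply i)
  have hcB : Continuous B := ((hφ.continuous.comp (cont_dot v)).mul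
    (hψ'.comp (cont_dot w))).mul (continuous_apply i)
  have hcF0 : Continuous F0 :=
    (hφ.continuous.comp (cont_dot v)).mul (hψ.continuous.comp (cont_dot w))
  have hcF : Continuous F := hcF0.mul (continuous_apply i)
  have hcF' : Continuous F' := ((continuous_const.mul hcA).add
    (continuous_const.mul hcB)).add (continuous_const.mul hcF0)
  have hbF0 : ∀ x, |F0 x| ≤ M0 * bf (Q + Q) x := master φ ψ hbφ hbψ
  have hbF : ∀ x, |F x| ≤ M0 * bf (Q + Q + 1) x := masteri φ ψ hbφ hbψ
  have hbA : ∀ x, |A x| ≤ M0 * bf (Q + Q + 1) x := masteri (deriv φ) ψ hbφ' hbψ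
  have hbB : ∀ x, |B x| ≤ M0 * bf (Q + Q + 1) x := masteri φ (deriv ψ) hbφ hbψ'
  have hintA : Integrable A (stdGaussian (n + 1)) := integrable_of_le_bf hcA _ _ hbA
  have hintB : Integrable B (stdGaussian (n + 1)) := integrable_of_le_bf hcB _ _ hbB
  have hintF0 : Integrable F0 (stdGaussian (n + 1)) := integrable_of_le_bf hcF0 _ _ hbF0
  set C : ℝ := (1 + |v k| + |w k|) * M0 with hC
  have hbF2 : ∀ x, |F x| ≤ C * bf (Q + Q + 1) x := by
    intro x
    refine le_trans (hbF x) ?_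
    rw [hC]
    have h6 := bf_nonneg (N := Q + Q + 1) x
    nlinarith [abs_nonneg (v k), abs_nonneg (w k), mul_nonneg hM00 h6,
      mul_nonneg (abs_nonneg (v k)) (mul_nonneg hM00 h6),
      mul_nonneg (abs_nonneg (w k)) (mul_nonneg hM00 h6)]
  have hbF' : ∀ x, |F' x| ≤ C * bf (Q + Q + 1) x := by
    intro x
    rw [hF']
    have h6 := bf_nonneg (N := Q + Q + 1) x
    have h4 : |v k * A x| ≤ |v k| * (M0 * bf (Q + Q + 1) x) := by
      rw [abs_mul]; exact mul_le_mul_of_nonneg_left (hbA x) (abs_nonneg _)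
    have h5 : |w k * B x| ≤ |w k| * (M0 * bf (Q + Q + 1) x) := by
      rw [abs_mul]; exact mul_le_mul_of_nonneg_left (hbB x) (abs_nonneg _)
    have h7 : |(if i = k then (1:ℝ) else 0) * F0 x| ≤ M0 * bf (Q + Q + 1) x := by
      rw [abs_mul]
      have h8 : |(if i = k then (1:ℝ) else 0)| ≤ 1 := by
        by_cases hik : i = k <;> simp [hik]
      have h9 : |F0 x| ≤ M0 * bf (Q + Q + 1) x :=
        le_trans (hbF0 x) (mul_le_mul_of_nonneg_left (bf_mono (by omega) x) hM00)
      calc |(if i = k then (1:ℝ) else 0)| * |F0 x| ≤ 1 * |F0 x| :=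
        mul_le_mul_of_nonneg_right h8 (abs_nonneg _)
      _ = |F0 x| := one_mul _
      _ ≤ M0 * bf (Q + Q + 1) x := h9
    rw [hC]
    calc |v k * A x + w k * B x + (if i = k then (1:ℝ) else 0) * F0 x|
        ≤ |v k * A x + w k * B x| + |(if i = k then (1:ℝ) else 0) * F0 x| := abs_add_le _ _
    _ ≤ (|v k * A x| + |w k * B x|) + |(if i = k then (1:ℝ) else 0) * F0 x| := by
        have := abs_add_le (v k * A x) (w k * B x)
        linarith
    _ ≤ (|v k| * (M0 * bf (Q + Q + 1) x) + |w k| * (M0 * bf (Q + Q + 1) x))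
          + M0 * bf (Q + Q + 1) x := by linarith
    _ ≤ (1 + |v k| + |w k|) * M0 * bf (Q + Q + 1) x := by nlinarith [mul_nonneg hM00 h6]
  have hd : ∀ (y : Fin n → ℝ) (t : ℝ),
      HasDerivAt (fun s => F (k.insertNth s y)) (F' (k.insertNth t y)) t := by
    intro y t
    set av := ∑ m, v (k.succAbove m) * y m with hav
    set bv := ∑ m, w (k.succAbove m) * y m with hbv
    have hfn : (fun s => F (k.insertNth s y))
        = fun s => φ (v k * s + av) * ψ (w k * s + bv)
            * (k.insertNth s y : Fin (n + 1) → ℝ) i := by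
      funext s
      rw [hF, hF0]
      simp only
      rw [dot_insertNth v k s y, dot_insertNth w k s y]
    have h1 : HasDerivAt (fun s : ℝ => v k * s + av) (v k) t := by
      simpa using ((hasDerivAt_id t).const_mul (v k)).add_const av
    have h2 : HasDerivAt (fun s : ℝ => w k * s + bv) (w k) t := by
      simpa using ((hasDerivAt_id t).const_mul (w k)).add_const bv
    have h3 : HasDerivAt (fun s => φ (v k * s + av)) (deriv φ (v k * t + av) * v k) t :=
      ((hφ (v k * t + av)).hasDerivAt).comp t h1
    have h4 : HasDerivAt (fun s => ψ (w k * s + bv)) (deriv ψ (w k * t + bv) * w k) t :=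
      ((hψ (w k * t + bv)).hasDerivAt).comp t h2
    have hcoord : HasDerivAt (fun s : ℝ => (k.insertNth s y : Fin (n + 1) → ℝ) i)
        (if i = k then (1:ℝ) else 0) t := by
      by_cases hik : i = k
      · subst hik
        simp only [Fin.insertNth_apply_same, if_pos rfl]
        exact hasDerivAt_id t
      · obtain ⟨m, rfl⟩ := Fin.exists_succAbove_eq hik
        simp only [Fin.insertNth_apply_succAbove]
        rw [if_neg hik]
        exact hasDerivAt_const t _
    have h5 := (h3.mul h4).mul hcoord
    rw [hfn]
    refine h5.congr_deriv ?_
    rw [hF']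
    simp only [hA, hB, hF0, Pi.mul_apply]
    rw [dot_insertNth v k t y, dot_insertNth w k t y]
    ring
  have hmain := stein_coord k F F' hcF hcF' hd C (Q + Q + 1) hbF2 hbF'
  have hgoalL : ∫ x, φ (∑ l, v l * x l) * ψ (∑ l, w l * x l) * x i * x k
      ∂(stdGaussian (n + 1)) = ∫ x, F x * x k ∂(stdGaussian (n + 1)) := rfl
  have hsplit : ∫ x, F' x ∂(stdGaussian (n + 1))
      = v k * ∫ x, A x ∂(stdGaussian (n + 1)) + w k * ∫ x, B x ∂(stdGaussian (n + 1))
        + (if i = k then (1:ℝ) else 0) * ∫ x, F0 x ∂(stdGaussian (n + 1)) := by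
    have h12 : Integrable (fun x => v k * A x + w k * B x) (stdGaussian (n + 1)) :=
      (hintA.const_mul (v k)).add (hintB.const_mul (w k))
    calc ∫ x, F' x ∂(stdGaussian (n + 1))
        = ∫ x, (v k * A x + w k * B x) + (if i = k then (1:ℝ) else 0) * F0 x
            ∂(stdGaussian (n + 1)) := rfl
    _ = (∫ x, v k * A x + w k * B x ∂(stdGaussian (n + 1)))
          + ∫ x, (if i = k then (1:ℝ) else 0) * F0 x ∂(stdGaussian (n + 1)) :=
        integral_add h12 (hintF0.const_mul _)
    _ = v k * ∫ x, A x ∂(stdGaussian (n + 1)) + w k * ∫ x, B x ∂(stdGaussian (n + 1))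
          + (if i = k then (1:ℝ) else 0) * ∫ x, F0 x ∂(stdGaussian (n + 1)) := by
        rw [integral_add (hintA.const_mul (v k)) (hintB.const_mul (w k)),
          integral_const_mul, integral_const_mul, integral_const_mul]
  rw [hgoalL, hmain, hsplit]

lemma merge_bounds (f1 f2 : ℝ → ℝ) (C1 : ℝ) (q1 : ℕ) (C2 : ℝ) (q2 : ℕ)
    (h1 : ∀ x, |f1 x| ≤ C1 * (1 + |x|) ^ q1) (h2 : ∀ x, |f2 x| ≤ C2 * (1 + |x|) ^ q2) :
    ∃ (C : ℝ) (q : ℕ), (∀ x, |f1 x| ≤ C * (1 + |x|) ^ q) ∧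
      (∀ x, |f2 x| ≤ C * (1 + |x|) ^ q) := by
  have hC1 : 0 ≤ C1 := nonneg_of_bound h1
  have hC2 : 0 ≤ C2 := nonneg_of_bound h2
  refine ⟨max C1 C2, max q1 q2, fun x => ?_, fun x => ?_⟩ <;>
    have hb1 : (1:ℝ) ≤ 1 + |x| := by linarith [abs_nonneg x]
  · calc |f1 x| ≤ C1 * (1 + |x|) ^ q1 := h1 x
    _ ≤ max C1 C2 * (1 + |x|) ^ max q1 q2 :=
      mul_le_mul (le_max_left _ _) (pow_le_pow_right₀ hb1 (le_max_left _ _))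
        (by positivity) (le_trans hC1 (le_max_left _ _))
  · calc |f2 x| ≤ C2 * (1 + |x|) ^ q2 := h2 x
    _ ≤ max C1 C2 * (1 + |x|) ^ max q1 q2 :=
      mul_le_mul (le_max_right _ _) (pow_le_pow_right₀ hb1 (le_max_right _ _))
        (by positivity) (le_trans hC2 (le_max_right _ _))

end SteinAux

open SteinAux in
/-- Second-order Stein identity: for unit vectors `v, w` and `C²` functions `g, h` with
polynomially growing derivatives, `E[g(vᵀx)h(wᵀx) x xᵀ]` decomposes into identity,
`v wᵀ + w vᵀ`, `v vᵀ` and `w wᵀ` parts (stated entrywise). -/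
theorem second_order_stein
    (d : ℕ) (v w : Fin d → ℝ)
    (hv : ∑ l, (v l) ^ 2 = 1) (hw : ∑ l, (w l) ^ 2 = 1)
    (g h : ℝ → ℝ) (hg : ContDiff ℝ 2 g) (hh : ContDiff ℝ 2 h)
    (hgrow : ∀ n : ℕ, n ≤ 2 → ∃ (C : ℝ) (q : ℕ), ∀ x : ℝ,
      |iteratedDeriv n g x| ≤ C * (1 + |x|) ^ q)
    (hgrow' : ∀ n : ℕ, n ≤ 2 → ∃ (C : ℝ) (q : ℕ), ∀ x : ℝ,
      |iteratedDeriv n h x| ≤ C * (1 + |x|) ^ q)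
    (i j : Fin d) :
    ∫ x, g (∑ l, v l * x l) * h (∑ l, w l * x l) * x i * x j ∂(stdGaussian d)
      = (∫ x, g (∑ l, v l * x l) * h (∑ l, w l * x l) ∂(stdGaussian d)) *
          (if i = j then 1 else 0)
        + (∫ x, deriv g (∑ l, v l * x l) * deriv h (∑ l, w l * x l) ∂(stdGaussian d)) *
            (v i * w j + w i * v j)
        + (∫ x, iteratedDeriv 2 g (∑ l, v l * x l) * h (∑ l, w l * x l) ∂(stdGaussian d)) *
            (v i * v j)
        + (∫ x, g (∑ l, v l * x l) * iteratedDeriv 2 h (∑ l, w l * x l) ∂(stdGaussian d)) *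
            (w i * w j) := by
  have hd0 : 0 < d := i.pos
  obtain ⟨n, rfl⟩ : ∃ n, d = n + 1 := ⟨d - 1, by omega⟩
  -- smoothness facts
  have h21 : (2 : WithTop ℕ∞) = 1 + 1 := by norm_num
  rw [h21] at hg hh
  have hgd : Differentiable ℝ g := hg.differentiable (by norm_num)
  have hhd : Differentiable ℝ h := hh.differentiable (by norm_num)
  have hg1 : ContDiff ℝ 1 (deriv g) := (contDiff_succ_iff_deriv.mp hg).2.2
  have hh1 : ContDiff ℝ 1 (deriv h) := (contDiff_succ_iff_deriv.mp hh).2.2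
  have hgd' : Differentiable ℝ (deriv g) := hg1.differentiable one_ne_zero
  have hhd' : Differentiable ℝ (deriv h) := hh1.differentiable one_ne_zero
  have hgc' : Continuous (deriv g) := hgd'.continuous
  have hhc' : Continuous (deriv h) := hhd'.continuous
  have hgc'' : Continuous (deriv (deriv g)) := hg1.continuous_deriv le_rfl
  have hhc'' : Continuous (deriv (deriv h)) := hh1.continuous_deriv le_rfl
  -- iterated derivative rewrites
  have e2g : iteratedDeriv 2 g = deriv (deriv g) := by
    rw [iteratedDeriv_succ, iteratedDeriv_one]
  have e2h : iteratedDeriv 2 h = deriv (deriv h) := by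
    rw [iteratedDeriv_succ, iteratedDeriv_one]
  -- growth bounds
  obtain ⟨Cg0, qg0, hbg0⟩ := hgrow 0 (by norm_num)
  obtain ⟨Cg1, qg1, hbg1⟩ := hgrow 1 (by norm_num)
  obtain ⟨Cg2, qg2, hbg2⟩ := hgrow 2 (by norm_num)
  obtain ⟨Ch0, qh0, hbh0⟩ := hgrow' 0 (by norm_num)
  obtain ⟨Ch1, qh1, hbh1⟩ := hgrow' 1 (by norm_num)
  obtain ⟨Ch2, qh2, hbh2⟩ := hgrow' 2 (by norm_num)
  rw [iteratedDeriv_zero] at hbg0 hbh0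
  rw [iteratedDeriv_one] at hbg1 hbh1
  rw [e2g] at hbg2
  rw [e2h] at hbh2
  obtain ⟨Cg, qg, hbg, hbg'⟩ := merge_bounds g (deriv g) _ _ _ _ hbg0 hbg1
  obtain ⟨Cg', qg', hbgd, hbgd'⟩ := merge_bounds (deriv g) (deriv (deriv g)) _ _ _ _ hbg1 hbg2
  obtain ⟨Ch, qh, hbh, hbh'⟩ := merge_bounds h (deriv h) _ _ _ _ hbh0 hbh1
  obtain ⟨Ch', qh', hbhd, hbhd'⟩ := merge_bounds (deriv h) (deriv (deriv h)) _ _ _ _ hbh1 hbh2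
  -- main applications
  have hM2 := stein_M2 v w g h hgd hhd hgc' hhc' Cg qg hbg hbg' Ch qh hbh hbh' i j
  have hM1a := stein_M1 v w (deriv g) h hgd' hhd hgc'' hhc' Cg' qg' hbgd hbgd'
    Ch qh hbh hbh' i
  have hM1b := stein_M1 v w g (deriv h) hgd hhd' hgc' hhc'' Cg qg hbg hbg'
    Ch' qh' hbhd hbhd' i
  rw [e2g, e2h, hM2, hM1a, hM1b]
  ring
end

section
/- Let X and Y be independent standard Gaussian random variables. Then for every δ > 0, P( Y < X < (1+δ) Y | X ≥ 0, Y ≥ 0 ) = (2/π) arctan( δ/(2+δ) ) ≤ δ/π. -/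
open MeasureTheory ProbabilityTheory
open Real Set

lemma aux_int : ∫ r in Set.Ioi (0:ℝ), r * Real.exp (-(r^2)/2) = 1 := by
  have key : ∀ x : ℝ, HasDerivAt (fun y : ℝ => -Real.exp (-(y^2)/2)) (x * Real.exp (-(x^2)/2)) x := by
    intro x
    have h1 : HasDerivAt (fun y : ℝ => -(y^2)/2) (-x) x := by
      have h := (hasDerivAt_pow 2 x).neg.div_const 2
      exact h.congr_deriv (by ring)
    have := (h1.exp).neg
    exact this.congr_deriv (by ring)
  have hint : IntegrableOn (fun r : ℝ => r * Real.exp (-(r^2)/2)) (Set.Ioi 0) := by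
    have := integrable_mul_exp_neg_mul_sq (b := (1:ℝ)/2) (by norm_num)
    refine (this.congr ?_).integrableOn
    filter_upwards with x
    ring_nf
  have hB : Filter.Tendsto (fun y : ℝ => -Real.exp (-(y^2)/2)) Filter.atTop (nhds 0) := by
    rw [show (0:ℝ) = -0 by ring]
    refine (Filter.Tendsto.neg ?_)
    apply Real.tendsto_exp_atBot.comp
    apply Filter.Tendsto.atBot_div_const (by norm_num)
    exact Filter.tendsto_neg_atBot_iff.mpr (Filter.tendsto_pow_atTop two_ne_zero)
  have := integral_Ioi_of_hasDerivAt_of_tendsto' (fun x _ => key x) hint hB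
  simpa using this

lemma prod_gauss : (gaussianReal 0 1).prod (gaussianReal 0 1) =
    ((volume : Measure ℝ).prod (volume : Measure ℝ)).withDensity
      (fun p => gaussianPDF 0 1 p.1 * gaussianPDF 0 1 p.2) := by
  refine Measure.prod_eq fun s t hs ht => ?_
  rw [withDensity_apply _ (hs.prod ht), ← Measure.prod_restrict,
    lintegral_prod_mul (measurable_gaussianPDF 0 1).aemeasurable
      (measurable_gaussianPDF 0 1).aemeasurable,
    gaussianReal_apply _ one_ne_zero, gaussianReal_apply _ one_ne_zero]

lemma Gval (r θ : ℝ) : gaussianPDFReal 0 1 (r * Real.cos θ) * gaussianPDFReal 0 1 (r * Real.sin θ)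
    = (2*π)⁻¹ * Real.exp (-(r^2)/2) := by
  simp only [gaussianPDFReal, NNReal.coe_one, mul_one, sub_zero]
  rw [mul_mul_mul_comm, ← Real.exp_add, ← mul_inv, Real.mul_self_sqrt (by positivity)]
  congr 1
  rw [Real.exp_eq_exp]
  linear_combination (-(r^2)/2) * Real.sin_sq_add_cos_sq θ

lemma sector (S : Set (ℝ×ℝ)) (hS : MeasurableSet S) (s : Set ℝ) (hs : MeasurableSet s)
    (hsub : s ⊆ Set.Ioo (-π) π)
    (hiff : ∀ r θ : ℝ, 0 < r → θ ∈ Set.Ioo (-π) π →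
      ((r * Real.cos θ, r * Real.sin θ) ∈ S ↔ θ ∈ s)) :
    ((gaussianReal 0 1).prod (gaussianReal 0 1)) S
      = ENNReal.ofReal ((volume s).toReal * (2*π)⁻¹) := by
  set G : ℝ × ℝ → ℝ := fun p => gaussianPDFReal 0 1 p.1 * gaussianPDFReal 0 1 p.2 with hG
  have hGnn : ∀ p, 0 ≤ G p := fun p =>
    mul_nonneg (gaussianPDFReal_nonneg _ _ _) (gaussianPDFReal_nonneg _ _ _)
  have hGi : Integrable G ((volume : Measure ℝ).prod volume) :=
    (integrable_gaussianPDFReal 0 1).mul_prod (integrable_gaussianPDFReal 0 1)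
  rw [prod_gauss, withDensity_apply _ hS]
  have h1 : (∫⁻ p in S, gaussianPDF 0 1 p.1 * gaussianPDF 0 1 p.2 ∂((volume : Measure ℝ).prod volume))
      = ∫⁻ p in S, ENNReal.ofReal (G p) ∂((volume : Measure ℝ).prod volume) := by
    refine lintegral_congr fun p => ?_
    rw [hG, gaussianPDF, gaussianPDF, ← ENNReal.ofReal_mul (gaussianPDFReal_nonneg _ _ _)]
  rw [h1, ← ofReal_integral_eq_lintegral_ofReal (hGi.restrict)
    (Filter.Eventually.of_forall fun p => hGnn p)]
  congr 1
  rw [← Measure.volume_eq_prod, ← integral_indicator hS, ← integral_comp_polarCoord_symm]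
  have h2 : ∀ p ∈ polarCoord.target,
      p.1 • (S.indicator G (polarCoord.symm p))
        = ((Set.Ioi (0:ℝ) ×ˢ s).indicator (fun q => (q.1 * ((2*π)⁻¹ * Real.exp (-(q.1^2)/2))) * 1)) p := by
    rintro ⟨r, θ⟩ hp
    rw [polarCoord_target] at hp
    obtain ⟨hr, hθ⟩ := hp
    have hmem : polarCoord.symm (r, θ) = (r * Real.cos θ, r * Real.sin θ) := rfl
    rw [hmem]
    by_cases h : θ ∈ s
    · rw [Set.indicator_of_mem ((hiff r θ hr hθ).mpr h),
        Set.indicator_of_mem (by exact ⟨hr, h⟩), hG]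
      simp only [smul_eq_mul]
      rw [Gval]
      ring
    · rw [Set.indicator_of_notMem (fun hc => h ((hiff r θ hr hθ).mp hc)),
        Set.indicator_of_notMem (fun hc => h hc.2)]
      simp
  rw [setIntegral_congr_fun polarCoord.open_target.measurableSet h2,
    setIntegral_indicator (measurableSet_Ioi.prod hs)]
  have h3 : polarCoord.target ∩ (Set.Ioi (0:ℝ) ×ˢ s) = Set.Ioi (0:ℝ) ×ˢ s := by
    rw [polarCoord_target, Set.prod_inter_prod, Set.inter_self,
      Set.inter_eq_right.mpr hsub]
  rw [h3, Measure.volume_eq_prod, ← Measure.prod_restrict,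
    integral_prod_mul (fun r : ℝ => r * ((2*π)⁻¹ * Real.exp (-(r^2)/2))) (fun _ : ℝ => (1:ℝ))]
  have h4 : (∫ r in Set.Ioi (0:ℝ), r * ((2*π)⁻¹ * Real.exp (-(r^2)/2))) = (2*π)⁻¹ := by
    have : ∀ r : ℝ, r * ((2*π)⁻¹ * Real.exp (-(r^2)/2)) = (2*π)⁻¹ * (r * Real.exp (-(r^2)/2)) := by
      intro r; ring
    simp_rw [this, integral_const_mul, aux_int, mul_one]
  rw [h4]
  simp [mul_comm, Measure.real]

lemma hiff1 (δ : ℝ) (hδ : 0 < δ) (r θ : ℝ) (hr : 0 < r) (hθ : θ ∈ Set.Ioo (-π) π) :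
    ((r * Real.cos θ, r * Real.sin θ) ∈
      {q : ℝ × ℝ | (q.2 < q.1 ∧ q.1 < (1 + δ) * q.2) ∧ 0 ≤ q.1 ∧ 0 ≤ q.2}) ↔
    θ ∈ Set.Ioo (Real.arctan (1+δ)⁻¹) (π/4) := by
  have hδ1 : (0:ℝ) < 1 + δ := by linarith
  simp only [Set.mem_setOf_eq, Set.mem_Ioo]
  constructor
  · rintro ⟨⟨h1, h2⟩, h3, h4⟩
    have hsc : Real.sin θ < Real.cos θ := (mul_lt_mul_iff_right₀ hr).mp h1
    have h2' : Real.cos θ < (1 + δ) * Real.sin θ := by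
      have : r * Real.cos θ < r * ((1 + δ) * Real.sin θ) := by
        calc r * Real.cos θ < (1 + δ) * (r * Real.sin θ) := h2
        _ = r * ((1 + δ) * Real.sin θ) := by ring
      exact (mul_lt_mul_iff_right₀ hr).mp this
    have hcos0 : 0 ≤ Real.cos θ := (mul_nonneg_iff_of_pos_left hr).mp h3
    have hsin : 0 < Real.sin θ := by nlinarith
    have hcos : 0 < Real.cos θ := lt_trans hsin hsc
    have hθ1 : 0 < θ := by
      by_contra h
      push_neg at h
      exact absurd (Real.sin_nonpos_of_nonpos_of_neg_pi_le h hθ.1.le) (not_le.mpr hsin)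
    have hθ2 : θ < π / 2 := by
      by_contra h
      push_neg at h
      have := Real.cos_nonpos_of_pi_div_two_le_of_le h (by linarith [hθ.2, Real.pi_pos])
      linarith
    have harc : Real.arctan (Real.tan θ) = θ := Real.arctan_tan (by linarith) hθ2
    constructor
    · rw [← harc]
      apply Real.arctan_strictMono
      rw [Real.tan_eq_sin_div_cos, lt_div_iff₀ hcos]
      have := mul_lt_mul_of_pos_left h2' (show (0:ℝ) < (1+δ)⁻¹ by positivity)
      have hu : (1+δ)⁻¹ * (1+δ) = 1 := inv_mul_cancel₀ (by linarith)
      nlinarith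
    · rw [← Real.arctan_one, ← harc]
      apply Real.arctan_strictMono
      rw [Real.tan_eq_sin_div_cos, div_lt_one hcos]
      exact hsc
  · rintro ⟨ha, hb⟩
    have harcpos : 0 < Real.arctan (1+δ)⁻¹ := by
      rw [← Real.arctan_zero]
      exact Real.arctan_strictMono (by positivity)
    have hθ1 : 0 < θ := lt_trans harcpos ha
    have hθ2 : θ < π / 2 := lt_trans hb (by linarith [Real.pi_pos])
    have hcos : 0 < Real.cos θ := Real.cos_pos_of_mem_Ioo ⟨by linarith, hθ2⟩
    have hsin : 0 < Real.sin θ := Real.sin_pos_of_pos_of_lt_pi hθ1 (by linarith [Real.pi_pos])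
    have harc : Real.arctan (Real.tan θ) = θ := Real.arctan_tan (by linarith) hθ2
    have htl : (1+δ)⁻¹ < Real.tan θ := by
      have : Real.arctan (1+δ)⁻¹ < Real.arctan (Real.tan θ) := by rw [harc]; exact ha
      exact Real.arctan_strictMono.lt_iff_lt.mp this
    have htu : Real.tan θ < 1 := by
      have : Real.arctan (Real.tan θ) < Real.arctan 1 := by
        rw [harc, Real.arctan_one]; exact hb
      exact Real.arctan_strictMono.lt_iff_lt.mp this
    rw [Real.tan_eq_sin_div_cos] at htl htu
    have hsc : Real.sin θ < Real.cos θ := (div_lt_one hcos).mp htu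
    have h2' : Real.cos θ < (1 + δ) * Real.sin θ := by
      rw [lt_div_iff₀ hcos] at htl
      have := mul_lt_mul_of_pos_left htl hδ1
      have hu : (1+δ) * (1+δ)⁻¹ = 1 := mul_inv_cancel₀ (by linarith)
      nlinarith
    refine ⟨⟨(mul_lt_mul_iff_right₀ hr).mpr hsc, ?_⟩,
      mul_nonneg hr.le hcos.le, mul_nonneg hr.le hsin.le⟩
    calc r * Real.cos θ < r * ((1 + δ) * Real.sin θ) := (mul_lt_mul_iff_right₀ hr).mpr h2'
    _ = (1 + δ) * (r * Real.sin θ) := by ring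

lemma hiff0 (r θ : ℝ) (hr : 0 < r) (hθ : θ ∈ Set.Ioo (-π) π) :
    ((r * Real.cos θ, r * Real.sin θ) ∈ {q : ℝ × ℝ | 0 ≤ q.1 ∧ 0 ≤ q.2}) ↔
    θ ∈ Set.Icc 0 (π/2) := by
  simp only [Set.mem_setOf_eq, Set.mem_Icc]
  constructor
  · rintro ⟨h1, h2⟩
    have hcos : 0 ≤ Real.cos θ := (mul_nonneg_iff_of_pos_left hr).mp h1
    have hsin : 0 ≤ Real.sin θ := (mul_nonneg_iff_of_pos_left hr).mp h2
    constructor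
    · by_contra h
      push_neg at h
      exact absurd (Real.sin_neg_of_neg_of_neg_pi_lt h hθ.1) (not_lt.mpr hsin)
    · by_contra h
      push_neg at h
      have := Real.cos_neg_of_pi_div_two_lt_of_lt h (by linarith [hθ.2, Real.pi_pos])
      linarith
  · rintro ⟨h1, h2⟩
    have hcos : 0 ≤ Real.cos θ := Real.cos_nonneg_of_mem_Icc ⟨by linarith [Real.pi_pos], h2⟩
    have hsin : 0 ≤ Real.sin θ := Real.sin_nonneg_of_nonneg_of_le_pi h1 (by linarith [Real.pi_pos])
    exact ⟨mul_nonneg hr.le hcos, mul_nonneg hr.le hsin⟩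

/-- For independent standard Gaussians `X, Y`:
`P(Y < X < (1+δ)Y ∣ X ≥ 0, Y ≥ 0) = (2/π) arctan(δ/(2+δ)) ≤ δ/π`. -/
theorem gaussian_ratio_conditional_prob (δ : ℝ) (hδ : 0 < δ) :
    ((gaussianReal 0 1).prod (gaussianReal 0 1))
        {q : ℝ × ℝ | (q.2 < q.1 ∧ q.1 < (1 + δ) * q.2) ∧ 0 ≤ q.1 ∧ 0 ≤ q.2} /
      ((gaussianReal 0 1).prod (gaussianReal 0 1)) {q : ℝ × ℝ | 0 ≤ q.1 ∧ 0 ≤ q.2}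
      = ENNReal.ofReal (2 / Real.pi * Real.arctan (δ / (2 + δ))) ∧
    2 / Real.pi * Real.arctan (δ / (2 + δ)) ≤ δ / Real.pi := by
  have hπ := Real.pi_pos
  set a := Real.arctan (1+δ)⁻¹ with ha
  have ha0 : 0 < a := by
    rw [ha, ← Real.arctan_zero]
    exact Real.arctan_strictMono (by positivity)
  have haπ : a < π/4 := by
    rw [ha, ← Real.arctan_one]
    apply Real.arctan_strictMono
    have hu : (1+δ) * (1+δ)⁻¹ = 1 := mul_inv_cancel₀ (by linarith)
    nlinarith [inv_pos.mpr (show (0:ℝ) < 1+δ by linarith)]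
  have key : a + Real.arctan (δ/(2+δ)) = π/4 := by
    have hxy : (1+δ)⁻¹ * (δ/(2+δ)) < 1 := by
      have he : (1+δ)⁻¹ * (δ/(2+δ)) = δ/((1+δ)*(2+δ)) := by
        field_simp
      rw [he, div_lt_one (by positivity)]
      nlinarith
    rw [ha, Real.arctan_add hxy]
    have hE : ((1+δ)⁻¹ + δ/(2+δ))/(1 - (1+δ)⁻¹ * (δ/(2+δ))) = 1 := by
      rw [div_eq_one_iff_eq]
      · field_simp
        ring
      · intro h
        rw [sub_eq_zero] at h
        exact absurd h.symm (ne_of_lt hxy)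
    rw [hE, Real.arctan_one]
  have hm1 : MeasurableSet {q : ℝ × ℝ | (q.2 < q.1 ∧ q.1 < (1 + δ) * q.2) ∧ 0 ≤ q.1 ∧ 0 ≤ q.2} := by
    simp only [Set.setOf_and]
    exact ((measurableSet_lt measurable_snd measurable_fst).inter
      (measurableSet_lt measurable_fst (measurable_const.mul measurable_snd))).inter
      ((measurableSet_le measurable_const measurable_fst).inter
        (measurableSet_le measurable_const measurable_snd))
  have hm0 : MeasurableSet {q : ℝ × ℝ | 0 ≤ q.1 ∧ 0 ≤ q.2} := by
    simp only [Set.setOf_and]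
    exact (measurableSet_le measurable_const measurable_fst).inter
      (measurableSet_le measurable_const measurable_snd)
  have num := sector _ hm1 (Set.Ioo a (π/4)) measurableSet_Ioo
    (fun x hx => ⟨by linarith [hx.1], by linarith [hx.2]⟩) (hiff1 δ hδ)
  have den := sector _ hm0 (Set.Icc 0 (π/2)) measurableSet_Icc
    (fun x hx => ⟨by linarith [hx.1], by linarith [hx.2]⟩) (hiff0)
  have h1 : (volume (Set.Ioo a (π/4))).toReal = π/4 - a := by
    rw [Real.volume_Ioo, ENNReal.toReal_ofReal (by linarith)]
  have h2 : (volume (Set.Icc (0:ℝ) (π/2))).toReal = π/2 := by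
    rw [Real.volume_Icc, ENNReal.toReal_ofReal (by linarith)]
    ring
  constructor
  · rw [num, den, h1, h2, ← ENNReal.ofReal_div_of_pos (by positivity)]
    congr 1
    rw [show π/4 - a = Real.arctan (δ/(2+δ)) by linarith]
    field_simp
  · have hnn : 0 ≤ Real.arctan (δ/(2+δ)) := by
      rw [← Real.arctan_zero]
      exact Real.arctan_strictMono.monotone (by positivity)
    have hu : Real.arctan (δ/(2+δ)) ≤ δ/(2+δ) := by
      have h1 := Real.le_tan hnn (Real.arctan_lt_pi_div_two _)
      rwa [Real.tan_arctan] at h1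
    have h2 : δ/(2+δ) ≤ δ/2 := by
      rw [div_le_div_iff₀ (by linarith) (by norm_num)]
      nlinarith
    calc 2 / π * Real.arctan (δ/(2+δ)) ≤ 2 / π * (δ/2) :=
          mul_le_mul_of_nonneg_left (hu.trans h2) (by positivity)
    _ = δ / π := by ring
end
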